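/- For all natural numbers g, s, t with g ≤ s ≤ t, one has 2^{-s} · ∑_{i=0}^{s-g} C(s,i) ≤ 2^{-t} · ∑_{i=0}^{t-g} C(t,i), where C(n,i) denotes the binomial coefficient. In other words, the function s ↦ 2^{-s} ∑_{i=0}^{s-g} C(s,i) is nondecreasing for s ≥ g. -/

import Mathlib

lemma pascal_sum_aux (n m : ℕ) :
    ∑ i ∈ Finset.range (m + 1), (n + 1).choose i
      = ∑ i ∈ Finset.range (m + 1), n.choose i + ∑ i ∈ Finset.range m, n.choose i := by
  induction m with
  | zero => simp
  | succ m ih =>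
    rw [Finset.sum_range_succ, ih, Nat.choose_succ_succ,
      Finset.sum_range_succ n.choose (m + 1), Finset.sum_range_succ n.choose m]
    simp only [Nat.succ_eq_add_one]
    omega

/-- For `g ≤ s ≤ t`, the quantity `2⁻ˢ ∑_{i=0}^{s-g} C(s,i)` is
nondecreasing in `s`. -/
theorem binomial_tail_ratio_mono (g s t : ℕ) (hgs : g ≤ s) (hst : s ≤ t) :
    (∑ i ∈ Finset.range (s - g + 1), (s.choose i : ℝ)) / 2 ^ s
      ≤ (∑ i ∈ Finset.range (t - g + 1), (t.choose i : ℝ)) / 2 ^ t := by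
  induction t, hst using Nat.le_induction with
  | base => exact le_rfl
  | succ t ht ih =>
    refine ih.trans ?_
    have hgt : g ≤ t := hgs.trans ht
    have hsub : t + 1 - g = (t - g) + 1 := by omega
    rw [hsub]
    set m := t - g
    have key : (2 : ℕ) * ∑ i ∈ Finset.range (m + 1), t.choose i
        ≤ ∑ i ∈ Finset.range (m + 1 + 1), (t + 1).choose i := by
      rw [pascal_sum_aux t (m + 1)]
      have : ∑ i ∈ Finset.range (m + 1), t.choose i
          ≤ ∑ i ∈ Finset.range (m + 1 + 1), t.choose i :=
        Finset.sum_le_sum_of_subset (Finset.range_subset_range.2 (by omega))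
      omega
    have key' : (2 : ℝ) * ∑ i ∈ Finset.range (m + 1), (t.choose i : ℝ)
        ≤ ∑ i ∈ Finset.range (m + 1 + 1), ((t + 1).choose i : ℝ) := by
      exact_mod_cast key
    rw [div_le_div_iff₀ (by positivity) (by positivity)]
    calc (∑ i ∈ Finset.range (m + 1), (t.choose i : ℝ)) * 2 ^ (t + 1)
        = (2 * ∑ i ∈ Finset.range (m + 1), (t.choose i : ℝ)) * 2 ^ t := by ring
      _ ≤ (∑ i ∈ Finset.range (m + 1 + 1), ((t + 1).choose i : ℝ)) * 2 ^ t := by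
          exact mul_le_mul_of_nonneg_right key' (by positivity)
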